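/- Let W be a finite-dimensional complex vector space and let g : [0,∞) → L(W) be a semigroup. Then there exists a decomposition W = V_1 ⊕ ⋯ ⊕ V_n with dim V_i ≥ 1 such that for each i and every x ≥ 0 the subspace V_i is invariant under g(x), and the restriction of g(x) to V_i has exactly one eigenvalue λ_i(x) ∈ ℂ (i.e. the characteristic polynomial of g(x)|V_i is (X − λ_i(x))^{dim V_i}). -/

import Mathlib

open Polynomial

lemma matrix_charpoly_of_isNilpotent_sub {ι K : Type*} [Fintype ι] [DecidableEq ι] [Field K]
    (A : Matrix ι ι K) (c : K) (h : IsNilpotent (A - c • 1)) :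
    A.charpoly = (X - C c) ^ Fintype.card ι := by
  set N : Matrix ι ι K := A - c • 1 with hN
  have hNc : N.charpoly = X ^ Fintype.card ι := by
    have h2 := (Matrix.isNilpotent_charpoly_sub_pow_of_isNilpotent h).eq_zero
    rwa [sub_eq_zero] at h2
  have key : Matrix.charmatrix A =
      (Matrix.charmatrix N).map (aeval (X - C c : K[X])) := by
    ext i j
    rcases eq_or_ne i j with rfl | hij
    · simp [Matrix.charmatrix_apply_eq, Matrix.map_apply, hN, Matrix.sub_apply,
        Matrix.smul_apply, Matrix.one_apply_eq, smul_eq_mul]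
    · simp [Matrix.charmatrix_apply_ne _ _ _ hij, Matrix.map_apply, hN, Matrix.sub_apply,
        Matrix.smul_apply, Matrix.one_apply_ne hij]
  rw [Matrix.charpoly, key, ← AlgHom.mapMatrix_apply, ← AlgHom.map_det, ← Matrix.charpoly,
    hNc, map_pow, aeval_X]

lemma end_charpoly_of_isNilpotent_sub {K V : Type*} [Field K] [AddCommGroup V] [Module K V]
    [FiniteDimensional K V] (f : Module.End K V) (c : K)
    (h : IsNilpotent (f - algebraMap K (Module.End K V) c)) :
    f.charpoly = (X - C c) ^ Module.finrank K V := by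
  let b := Module.finBasis K V
  have hm : IsNilpotent (LinearMap.toMatrix b b f - c • 1) := by
    have := h.map ((LinearMap.toMatrixAlgEquiv b).toAlgHom :
      Module.End K V →ₐ[K] Matrix (Fin (Module.finrank K V)) (Fin (Module.finrank K V)) K)
    simpa [map_sub, Algebra.algebraMap_eq_smul_one, LinearMap.toMatrixAlgEquiv] using this
  have hc := matrix_charpoly_of_isNilpotent_sub (LinearMap.toMatrix b b f) c hm
  rw [← LinearMap.charpoly_toMatrix f b, hc, Fintype.card_fin]

/-- Simultaneous primary decomposition of a semigroup of linear maps on a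
finite-dimensional complex vector space: the space decomposes into invariant subspaces on
each of which every `g x` has exactly one eigenvalue. -/
theorem complex_primary_decomposition
    {W : Type*} [AddCommGroup W] [Module ℂ W] [FiniteDimensional ℂ W]
    (g : ℝ → W →ₗ[ℂ] W)
    (hg0 : g 0 = LinearMap.id)
    (hgadd : ∀ x y : ℝ, 0 ≤ x → 0 ≤ y → g (x + y) = g x ∘ₗ g y) :
    ∃ (n : ℕ) (V : Fin n → Submodule ℂ W),
      DirectSum.IsInternal V ∧
      (∀ i, 1 ≤ Module.finrank ℂ (V i)) ∧
      ∃ hinv : ∀ (i : Fin n) (x : ℝ), 0 ≤ x → ∀ v ∈ V i, g x v ∈ V i,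
        ∀ i : Fin n, ∃ lam : ℝ → ℂ,
          ∀ (x : ℝ) (hx : 0 ≤ x),
            ((g x).restrict (hinv i x hx)).charpoly
              = (X - C (lam x)) ^ Module.finrank ℂ (V i) := by
  classical
  let f : {x : ℝ // 0 ≤ x} → Module.End ℂ W := fun x => g x.1
  have hcomm : ∀ i j, Commute (f i) (f j) := by
    intro i j
    show f i * f j = f j * f i
    simp only [f, Module.End.mul_eq_comp]
    rw [← hgadd i.1 j.1 i.2 j.2, ← hgadd j.1 i.1 j.2 i.2, add_comm]
  have hmap : ∀ i j φ, Set.MapsTo (f i) ((f j).maxGenEigenspace φ)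
      ((f j).maxGenEigenspace φ) :=
    fun i j φ => Module.End.mapsTo_maxGenEigenspace_of_comm (hcomm j i) φ
  have hsup : ⨆ χ : {x : ℝ // 0 ≤ x} → ℂ, ⨅ i, (f i).maxGenEigenspace (χ i) = ⊤ :=
    Module.End.iSup_iInf_maxGenEigenspace_eq_top_of_forall_mapsTo f hmap
      (fun i => Module.End.iSup_maxGenEigenspace_eq_top (f i))
  have hindep : iSupIndep (fun χ : {x : ℝ // 0 ≤ x} → ℂ =>
      ⨅ i, (f i).maxGenEigenspace (χ i)) :=
    Module.End.independent_iInf_maxGenEigenspace_of_forall_mapsTo f hmap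
  have hfin : {χ : {x : ℝ // 0 ≤ x} → ℂ |
      (⨅ i, (f i).maxGenEigenspace (χ i)) ≠ ⊥}.Finite :=
    WellFoundedGT.finite_ne_bot_of_iSupIndep hindep
  set S := hfin.toFinset with hS
  let e : Fin S.card ≃ S := S.equivFin.symm
  refine ⟨S.card, fun k => ⨅ i, (f i).maxGenEigenspace ((e k).1 i), ?_, ?_, ?_⟩
  · rw [DirectSum.isInternal_submodule_iff_iSupIndep_and_iSup_eq_top]
    constructor
    · exact hindep.comp (Subtype.val_injective.comp e.injective)
    · apply le_antisymm le_top
      rw [← hsup]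
      apply iSup_le
      intro χ
      by_cases hχ : (⨅ i, (f i).maxGenEigenspace (χ i)) = ⊥
      · rw [hχ]; exact bot_le
      · have hχS : χ ∈ S := by rw [hS, Set.Finite.mem_toFinset]; exact hχ
        have : χ = (e (e.symm ⟨χ, hχS⟩)).1 := by rw [e.apply_symm_apply]
        rw [this]
        exact le_iSup (fun k => ⨅ i, (f i).maxGenEigenspace ((e k).1 i)) (e.symm ⟨χ, hχS⟩)
  · intro k
    have hne : (⨅ i, (f i).maxGenEigenspace ((e k).1 i)) ≠ ⊥ :=
      hfin.mem_toFinset.mp (e k).2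
    have : Nontrivial (⨅ i, (f i).maxGenEigenspace ((e k).1 i) : Submodule ℂ W) :=
      Submodule.nontrivial_iff_ne_bot.mpr hne
    exact Module.finrank_pos_iff.mpr this
  · have hinv : ∀ (k : Fin S.card) (x : ℝ), 0 ≤ x →
        ∀ v ∈ ⨅ i, (f i).maxGenEigenspace ((e k).1 i),
          g x v ∈ ⨅ i, (f i).maxGenEigenspace ((e k).1 i) := by
      intro k x hx v hv
      rw [Submodule.mem_iInf] at hv ⊢
      intro j
      exact hmap ⟨x, hx⟩ j ((e k).1 j) (hv j)
    refine ⟨hinv, ?_⟩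
    intro k
    refine ⟨fun x => if hx : 0 ≤ x then (e k).1 ⟨x, hx⟩ else 0, ?_⟩
    intro x hx
    have hbeta : (fun x => if hx : 0 ≤ x then (e k).1 ⟨x, hx⟩ else 0) x
        = (e k).1 ⟨x, hx⟩ := dif_pos hx
    rw [hbeta]
    set c : ℂ := (e k).1 ⟨x, hx⟩ with hc
    set p : Submodule ℂ W := ⨅ i, (f i).maxGenEigenspace ((e k).1 i) with hp
    set r : Module.End ℂ p := (g x).restrict (hinv k x hx) with hr
    set N : Module.End ℂ p := r - algebraMap ℂ (Module.End ℂ p) c with hNdef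
    have key : ∀ (m : ℕ) (v : p),
        ((N ^ m) v : W) = ((g x - c • (1 : Module.End ℂ W)) ^ m) (v : W) := by
      intro m
      induction m with
      | zero => intro v; simp
      | succ m ih =>
        intro v
        rw [pow_succ, Module.End.mul_apply, pow_succ, Module.End.mul_apply]
        have hNv : ((N v : p) : W) = (g x - c • (1 : Module.End ℂ W)) (v : W) := by
          simp [hNdef, hr, Module.algebraMap_end_apply, LinearMap.sub_apply,
            LinearMap.restrict_apply, LinearMap.smul_apply]
        rw [← hNv, ih]
    have hnil : IsNilpotent N := by
      rw [LinearMap.isNilpotent_iff_charpoly]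
      rw [LinearMap.charpoly_eq_X_pow_iff]
      intro v
      have hv : (v : W) ∈ (f ⟨x, hx⟩).maxGenEigenspace c :=
        (Submodule.mem_iInf (fun i => (f i).maxGenEigenspace ((e k).1 i))).mp v.2 ⟨x, hx⟩
      rw [Module.End.mem_maxGenEigenspace] at hv
      obtain ⟨m, hm⟩ := hv
      refine ⟨m, ?_⟩
      have : ((N ^ m) v : W) = 0 := by
        rw [key m v]
        simpa using hm
      exact Subtype.ext this
    have := end_charpoly_of_isNilpotent_sub r c hnil
    exact this
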